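/- Let Γ be a simplicial graph and G = {G_u} a collection of groups. For every element g of the graph product ΓG, any two reduced words representing g have the same length, and the set of vertex groups containing the syllables is the same; hence the length and support of g are well defined. -/

import Mathlib

section

variable {ι : Type*}

/-- The commutation relators defining the graph product inside the free product. -/
def graphProdRels (Γ : SimpleGraph ι) (M : ι → Type*) [∀ i, Group (M i)] :
    Set (Monoid.CoprodI M) :=
  {x | ∃ (i j : ι) (_ : Γ.Adj i j) (g : M i) (h : M j),
    x = Monoid.CoprodI.of g * Monoid.CoprodI.of h *
      (Monoid.CoprodI.of g)⁻¹ * (Monoid.CoprodI.of h)⁻¹}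

/-- The graph product `ΓM`. -/
abbrev GraphProduct (Γ : SimpleGraph ι) (M : ι → Type*) [∀ i, Group (M i)] :=
  Monoid.CoprodI M ⧸ Subgroup.normalClosure (graphProdRels Γ M)

variable (Γ : SimpleGraph ι) (M : ι → Type*) [∀ i, Group (M i)]

/-- The element of the graph product represented by a word (a list of syllables). -/
def evalWord (w : List (Σ i, M i)) : GraphProduct Γ M :=
  (w.map fun s => (QuotientGroup.mk (Monoid.CoprodI.of s.2) : GraphProduct Γ M)).prod

/-- An elementary move on words: cancellation, amalgamation, or shuffling. -/
def WordStep (w w' : List (Σ i, M i)) : Prop :=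
  (∃ (l r : List (Σ i, M i)) (i : ι),
    w = l ++ ⟨i, (1 : M i)⟩ :: r ∧ w' = l ++ r) ∨
  (∃ (l r : List (Σ i, M i)) (i : ι) (g h : M i),
    w = l ++ ⟨i, g⟩ :: ⟨i, h⟩ :: r ∧ w' = l ++ ⟨i, g * h⟩ :: r) ∨
  (∃ (l r : List (Σ i, M i)) (i j : ι) (g : M i) (h : M j), Γ.Adj i j ∧
    w = l ++ ⟨i, g⟩ :: ⟨j, h⟩ :: r ∧ w' = l ++ ⟨j, h⟩ :: ⟨i, g⟩ :: r)

/-- A word is reduced if no sequence of elementary moves shortens it. -/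
def ReducedWord (w : List (Σ i, M i)) : Prop :=
  ∀ w' : List (Σ i, M i), Relation.ReflTransGen (WordStep Γ M) w w' →
    w.length ≤ w'.length

/-- The support of a word: the vertices whose vertex group contains a syllable. -/
def wordSupport (w : List (Σ i, M i)) : Set ι :=
  {i | ∃ g : M i, (⟨i, g⟩ : Σ i, M i) ∈ w}

end


open Relation

set_option linter.unusedSectionVars false

namespace GreenAux

theorem split_single {α : Type*} (l₁ : List α) {r₁ l₂ r₂ : List α} {s t : α}
    (h : l₁ ++ s :: r₁ = l₂ ++ t :: r₂) :
    (l₁ = l₂ ∧ s = t ∧ r₁ = r₂) ∨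
    (∃ m, l₂ = l₁ ++ s :: m ∧ r₁ = m ++ t :: r₂) ∨
    (∃ m, l₁ = l₂ ++ t :: m ∧ r₂ = m ++ s :: r₁) := by
  induction l₁ generalizing l₂ with
  | nil =>
    cases l₂ with
    | nil =>
      simp only [List.nil_append, List.cons.injEq] at h
      exact Or.inl ⟨rfl, h.1, h.2⟩
    | cons c l₂ =>
      simp only [List.nil_append, List.cons_append, List.cons.injEq] at h
      exact Or.inr (Or.inl ⟨l₂, by simp [h.1], h.2⟩)
  | cons a l₁ ih =>
    cases l₂ with
    | nil =>
      simp only [List.cons_append, List.nil_append, List.cons.injEq] at h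
      exact Or.inr (Or.inr ⟨l₁, by simp [h.1], h.2.symm⟩)
    | cons c l₂ =>
      simp only [List.cons_append, List.cons.injEq] at h
      obtain ⟨rfl, h2⟩ := h
      rcases ih h2 with ⟨rfl, rfl, rfl⟩ | ⟨m, rfl, rfl⟩ | ⟨m, rfl, rfl⟩
      · exact Or.inl ⟨rfl, rfl, rfl⟩
      · exact Or.inr (Or.inl ⟨m, rfl, rfl⟩)
      · exact Or.inr (Or.inr ⟨m, rfl, rfl⟩)

theorem split_double {α : Type*} (l₁ : List α) {r₁ l₂ r₂ : List α} {s x y : α}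
    (h : l₁ ++ s :: r₁ = l₂ ++ x :: y :: r₂) :
    (l₁ = l₂ ∧ s = x ∧ r₁ = y :: r₂) ∨
    (l₁ = l₂ ++ [x] ∧ s = y ∧ r₁ = r₂) ∨
    (∃ m, l₂ = l₁ ++ s :: m ∧ r₁ = m ++ x :: y :: r₂) ∨
    (∃ m, l₁ = l₂ ++ x :: y :: m ∧ r₂ = m ++ s :: r₁) := by
  rcases split_single l₁ h with ⟨rfl, rfl, rfl⟩ | ⟨m, rfl, rfl⟩ | ⟨m, h1, h2⟩
  · exact Or.inl ⟨rfl, rfl, rfl⟩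
  · exact Or.inr (Or.inr (Or.inl ⟨m, rfl, rfl⟩))
  · cases m with
    | nil =>
      simp only [List.nil_append, List.cons.injEq] at h2
      obtain ⟨rfl, rfl⟩ := h2
      exact Or.inr (Or.inl ⟨by simpa using h1, rfl, rfl⟩)
    | cons c m =>
      simp only [List.cons_append, List.cons.injEq] at h2
      obtain ⟨rfl, rfl⟩ := h2
      exact Or.inr (Or.inr (Or.inr ⟨m, by simpa using h1, rfl⟩))

section

variable {ι : Type*} (Γ : SimpleGraph ι) (M : ι → Type*) [∀ i, Group (M i)]

/-- A single shuffle (swap of adjacent commuting syllables). -/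
def Sw (w w' : List (Σ i, M i)) : Prop :=
  ∃ (l r : List (Σ i, M i)) (i j : ι) (g : M i) (h : M j), Γ.Adj i j ∧
    w = l ++ ⟨i, g⟩ :: ⟨j, h⟩ :: r ∧ w' = l ++ ⟨j, h⟩ :: ⟨i, g⟩ :: r

/-- A shrinking move: cancellation or amalgamation. -/
def Ds (w w' : List (Σ i, M i)) : Prop :=
  (∃ (l r : List (Σ i, M i)) (i : ι),
    w = l ++ ⟨i, (1 : M i)⟩ :: r ∧ w' = l ++ r) ∨
  (∃ (l r : List (Σ i, M i)) (i : ι) (g h : M i),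
    w = l ++ ⟨i, g⟩ :: ⟨i, h⟩ :: r ∧ w' = l ++ ⟨i, g * h⟩ :: r)

variable {Γ M}

theorem wordStep_iff {w w' : List (Σ i, M i)} :
    WordStep Γ M w w' ↔ Ds M w w' ∨ Sw Γ M w w' := by
  unfold WordStep Ds Sw
  exact or_assoc.symm

theorem Sw.symm' {w w' : List (Σ i, M i)} (h : Sw Γ M w w') : Sw Γ M w' w := by
  obtain ⟨l, r, i, j, g, hh, hadj, rfl, rfl⟩ := h
  exact ⟨l, r, j, i, hh, g, hadj.symm, rfl, rfl⟩

theorem Sw.perm {w w' : List (Σ i, M i)} (h : Sw Γ M w w') : w.Perm w' := by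
  obtain ⟨l, r, i, j, g, hh, hadj, rfl, rfl⟩ := h
  exact List.Perm.append_left l (List.Perm.swap _ _ _)

theorem ee_perm {w w' : List (Σ i, M i)} (h : ReflTransGen (Sw Γ M) w w') : w.Perm w' := by
  induction h with
  | refl => exact List.Perm.refl _
  | tail _ h ih => exact ih.trans h.perm

theorem ee_symm {w w' : List (Σ i, M i)} (h : ReflTransGen (Sw Γ M) w w') :
    ReflTransGen (Sw Γ M) w' w :=
  (@ReflTransGen.stdSymm _ _ ⟨fun _ _ hs => Sw.symm' hs⟩).symm _ _ h

theorem Ds.length {w w' : List (Σ i, M i)} (h : Ds M w w') : w'.length + 1 = w.length := by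
  rcases h with ⟨l, r, i, rfl, rfl⟩ | ⟨l, r, i, g, hh, rfl, rfl⟩ <;>
    simp [List.length_append] <;> omega

theorem WordStep.length_le {w w' : List (Σ i, M i)} (h : WordStep Γ M w w') :
    w'.length ≤ w.length := by
  rcases wordStep_iff.mp h with h | h
  · have := h.length; omega
  · exact h.perm.length_eq.ge

theorem Sw.append_left {w w' : List (Σ i, M i)} (c : List (Σ i, M i)) (h : Sw Γ M w w') :
    Sw Γ M (c ++ w) (c ++ w') := by
  obtain ⟨l, r, i, j, g, hh, hadj, rfl, rfl⟩ := h
  exact ⟨c ++ l, r, i, j, g, hh, hadj, by simp, by simp⟩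

theorem ee_append_left {w w' : List (Σ i, M i)} (c : List (Σ i, M i))
    (h : ReflTransGen (Sw Γ M) w w') : ReflTransGen (Sw Γ M) (c ++ w) (c ++ w') :=
  ReflTransGen.lift (fun x => c ++ x) (fun _ _ hs => Sw.append_left c hs) _ _ h

theorem sw_track {u v z : List (Σ i, M i)} (s : Σ i, M i) (h : Sw Γ M (u ++ s :: v) z) :
    ∃ u' v', z = u' ++ s :: v' ∧ ReflTransGen (Sw Γ M) (u ++ v) (u' ++ v') := by
  obtain ⟨l, r, i, j, g, hh, hadj, heq, rfl⟩ := h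
  rcases split_double u heq with ⟨rfl, rfl, rfl⟩ | ⟨rfl, rfl, rfl⟩ | ⟨m, rfl, rfl⟩ | ⟨m, rfl, rfl⟩
  · exact ⟨u ++ [⟨j, hh⟩], r, by simp, by simpa using ReflTransGen.refl⟩
  · exact ⟨l, ⟨i, g⟩ :: v, by simp, by simpa using ReflTransGen.refl⟩
  · exact ⟨u, m ++ ⟨j, hh⟩ :: ⟨i, g⟩ :: r, by simp,
      ReflTransGen.single ⟨u ++ m, r, i, j, g, hh, hadj, by simp, by simp⟩⟩
  · exact ⟨l ++ ⟨j, hh⟩ :: ⟨i, g⟩ :: m, v, by simp,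
      ReflTransGen.single ⟨l, m ++ v, i, j, g, hh, hadj, by simp, by simp⟩⟩

theorem ee_track {u v y : List (Σ i, M i)} (s : Σ i, M i)
    (h : ReflTransGen (Sw Γ M) (u ++ s :: v) y) :
    ∃ u' v', y = u' ++ s :: v' ∧ ReflTransGen (Sw Γ M) (u ++ v) (u' ++ v') := by
  induction h with
  | refl => exact ⟨u, v, rfl, ReflTransGen.refl⟩
  | tail _ hlast ih =>
    obtain ⟨u', v', rfl, hee⟩ := ih
    obtain ⟨u'', v'', rfl, hee2⟩ := sw_track s hlast
    exact ⟨u'', v'', rfl, hee.trans hee2⟩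

theorem sw_track_pair {j : ι} {p q : M j} {a m b z : List (Σ i, M i)}
    (hm : ∀ t ∈ m, Γ.Adj j t.1)
    (h : Sw Γ M (a ++ ⟨j, p⟩ :: (m ++ ⟨j, q⟩ :: b)) z) :
    ∃ a' m' b', z = a' ++ ⟨j, p⟩ :: (m' ++ ⟨j, q⟩ :: b') ∧ (∀ t ∈ m', Γ.Adj j t.1) ∧
      ReflTransGen (Sw Γ M) (a ++ (m ++ ⟨j, p * q⟩ :: b)) (a' ++ (m' ++ ⟨j, p * q⟩ :: b')) := by
  obtain ⟨l, r, i, k, g, hh, hadj, heq, rfl⟩ := h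
  rcases split_double a heq with ⟨rfl, hs, hv⟩ | ⟨rfl, hs, hv⟩ | ⟨m₁, rfl, hv⟩ | ⟨m₁, rfl, hr⟩
  · -- swap involves the marked ⟨j,p⟩ as the left member
    injection hs with h1 h2
    subst h1
    obtain rfl := eq_of_heq h2
    cases m with
    | nil =>
      simp only [List.nil_append, List.cons.injEq] at hv
      obtain ⟨hs2, rfl⟩ := hv
      injection hs2 with h3 h4
      subst h3
      exact (Γ.irrefl hadj).elim
    | cons t m₀ =>
      simp only [List.cons_append, List.cons.injEq] at hv
      obtain ⟨rfl, rfl⟩ := hv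
      refine ⟨a ++ [⟨k, hh⟩], m₀, b, by simp, fun t' ht' => hm t' (by simp [ht']), ?_⟩
      simpa using (ReflTransGen.refl :
        ReflTransGen (Sw Γ M) (a ++ ⟨k, hh⟩ :: (m₀ ++ ⟨j, p * q⟩ :: b)) _)
  · -- swap involves the marked ⟨j,p⟩ as the right member
    injection hs with h1 h2
    subst h1
    obtain rfl := eq_of_heq h2
    subst hv
    refine ⟨l, ⟨i, g⟩ :: m, b, by simp, ?_, ?_⟩
    · intro t ht
      rcases List.mem_cons.mp ht with rfl | ht
      · exact hadj.symm
      · exact hm t ht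
    · simpa using (ReflTransGen.refl :
        ReflTransGen (Sw Γ M) (l ++ ⟨i, g⟩ :: (m ++ ⟨j, p * q⟩ :: b)) _)
  · -- swap strictly right of the marked ⟨j,p⟩
    rcases split_double m hv with ⟨rfl, hs2, hv2⟩ | ⟨rfl, hs2, hv2⟩ | ⟨m₂, rfl, hv2⟩ | ⟨m₂, hm2, hv2⟩
    · -- swap involves marked ⟨j,q⟩ as left member
      injection hs2 with h1 h2
      subst h1
      obtain rfl := eq_of_heq h2
      subst hv2
      refine ⟨a, m ++ [⟨k, hh⟩], r, by simp, ?_, ?_⟩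
      · intro t ht
        rcases List.mem_append.mp ht with ht | ht
        · exact hm t ht
        · rcases List.mem_singleton.mp ht with rfl
          exact hadj
      · exact ReflTransGen.single ⟨a ++ m, r, j, k, p * q, hh, hadj, by simp, by simp⟩
    · -- swap involves marked ⟨j,q⟩ as right member
      injection hs2 with h1 h2
      subst h1
      obtain rfl := eq_of_heq h2
      subst hv2
      refine ⟨a, m₁, ⟨i, g⟩ :: b, by simp, fun t ht => hm t (by simp [ht]), ?_⟩
      refine ReflTransGen.single ⟨a ++ m₁, b, i, j, g, p * q, ?_, by simp, by simp⟩
      exact (hm ⟨i, g⟩ (by simp)).symm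
    · -- swap inside b
      subst hv2
      refine ⟨a, m, m₂ ++ ⟨k, hh⟩ :: ⟨i, g⟩ :: r, by simp, hm, ?_⟩
      exact ReflTransGen.single
        ⟨a ++ m ++ ⟨j, p * q⟩ :: m₂, r, i, k, g, hh, hadj, by simp, by simp⟩
    · -- swap inside m
      subst hm2
      subst hv2
      refine ⟨a, m₁ ++ ⟨k, hh⟩ :: ⟨i, g⟩ :: m₂, b, by simp, ?_, ?_⟩
      · intro t ht
        apply hm
        simp only [List.mem_append, List.mem_cons] at ht ⊢
        tauto
      · exact ReflTransGen.single
          ⟨a ++ m₁, m₂ ++ ⟨j, p * q⟩ :: b, i, k, g, hh, hadj, by simp, by simp⟩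
  · -- swap inside a
    subst hr
    refine ⟨l ++ ⟨k, hh⟩ :: ⟨i, g⟩ :: m₁, m, b, by simp, hm, ?_⟩
    exact ReflTransGen.single
      ⟨l, m₁ ++ (m ++ ⟨j, p * q⟩ :: b), i, k, g, hh, hadj, by simp, by simp⟩

theorem ee_track_pair {j : ι} {p q : M j} {u v y : List (Σ i, M i)}
    (h : ReflTransGen (Sw Γ M) (u ++ ⟨j, p⟩ :: ⟨j, q⟩ :: v) y) :
    ∃ a m b, y = a ++ ⟨j, p⟩ :: (m ++ ⟨j, q⟩ :: b) ∧ (∀ t ∈ m, Γ.Adj j t.1) ∧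
      ReflTransGen (Sw Γ M) (u ++ ⟨j, p * q⟩ :: v) (a ++ (m ++ ⟨j, p * q⟩ :: b)) := by
  induction h with
  | refl => exact ⟨u, [], v, by simp, by simp, by simpa using
      (ReflTransGen.refl : ReflTransGen (Sw Γ M) (u ++ ⟨j, p * q⟩ :: v) _)⟩
  | tail _ hlast ih =>
    obtain ⟨a, m, b, rfl, hadjm, hee⟩ := ih
    obtain ⟨a', m', b', rfl, hadjm', hee2⟩ := sw_track_pair hadjm hlast
    exact ⟨a', m', b', rfl, hadjm', hee.trans hee2⟩

theorem bubble {j : ι} (z : M j) :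
    ∀ (m : List (Σ i, M i)), (∀ t ∈ m, Γ.Adj j t.1) → ∀ (a w : List (Σ i, M i)),
      ReflTransGen (Sw Γ M) (a ++ ⟨j, z⟩ :: (m ++ w)) (a ++ (m ++ ⟨j, z⟩ :: w)) := by
  intro m
  induction m with
  | nil =>
    intro _ a w
    simp only [List.nil_append]
    exact ReflTransGen.refl
  | cons t m ih =>
    intro hm a w
    refine ReflTransGen.head (b := a ++ t :: ⟨j, z⟩ :: (m ++ w))
      ⟨a, m ++ w, j, t.1, z, t.2, hm t (by simp), by simp, by simp⟩ ?_
    simpa using ih (fun t' ht' => hm t' (by simp [ht'])) (a ++ [t]) w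

variable (Γ M) in
/-- The shrink relation on shuffle classes of words. -/
def DT : Quot (Sw Γ M) → Quot (Sw Γ M) → Prop := fun A B =>
  ∃ x c, A = Quot.mk _ x ∧ B = Quot.mk _ c ∧ Ds M x c

theorem mkT_eq {w w' : List (Σ i, M i)} (h : ReflTransGen (Sw Γ M) w w') :
    Quot.mk (Sw Γ M) w = Quot.mk (Sw Γ M) w' := by
  induction h with
  | refl => rfl
  | tail _ h ih => exact ih.trans (Quot.sound h)

theorem ee_of_mkT {w w' : List (Σ i, M i)} (hq : Quot.mk (Sw Γ M) w = Quot.mk (Sw Γ M) w') :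
    ReflTransGen (Sw Γ M) w w' := by
  have h' := Quot.eq.mp hq
  clear hq
  induction h' with
  | rel u u' hr => exact ReflTransGen.single hr
  | refl _ => exact ReflTransGen.refl
  | symm _ _ _ ih => exact ee_symm ih
  | trans _ _ _ _ _ ih1 ih2 => exact ih1.trans ih2

theorem dt_of {w w₁ d : List (Σ i, M i)} (hEE : ReflTransGen (Sw Γ M) w w₁)
    (hds : Ds M w₁ d) : DT Γ M (Quot.mk _ w) (Quot.mk _ d) :=
  ⟨w₁, d, mkT_eq hEE, rfl, hds⟩

theorem dt_pair {j : ι} {p q : M j} (a m b : List (Σ i, M i)) (hm : ∀ t ∈ m, Γ.Adj j t.1) :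
    DT Γ M (Quot.mk _ (a ++ ⟨j, p⟩ :: (m ++ ⟨j, q⟩ :: b)))
      (Quot.mk _ (a ++ (m ++ ⟨j, p * q⟩ :: b))) :=
  dt_of (bubble p m hm a (⟨j, q⟩ :: b))
    (Or.inr ⟨a ++ m, b, j, p, q, by simp, by simp⟩)

theorem ds_vs_single {i : ι} {u v c : List (Σ i, M i)}
    (h : Ds M (u ++ ⟨i, (1 : M i)⟩ :: v) c) :
    c = u ++ v ∨ ∃ d, Ds M (u ++ v) d ∧ Ds M c d := by
  rcases h with ⟨l, r, k, heq, rfl⟩ | ⟨l, r, k, g, hh, heq, rfl⟩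
  · rcases split_single u heq with ⟨rfl, hs, rfl⟩ | ⟨m, rfl, rfl⟩ | ⟨m, rfl, rfl⟩
    · exact Or.inl rfl
    · refine Or.inr ⟨u ++ (m ++ r), ?_, ?_⟩
      · exact Or.inl ⟨u ++ m, r, k, by simp, by simp⟩
      · exact Or.inl ⟨u, m ++ r, i, by simp, by simp⟩
    · refine Or.inr ⟨l ++ (m ++ v), ?_, ?_⟩
      · exact Or.inl ⟨l, m ++ v, k, by simp, by simp⟩
      · exact Or.inl ⟨l ++ m, v, i, by simp, by simp⟩
  · rcases split_double u heq with ⟨rfl, hs, rfl⟩ | ⟨rfl, hs, rfl⟩ | ⟨m, rfl, rfl⟩ | ⟨m, rfl, rfl⟩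
    · injection hs with h1 h2
      subst h1
      obtain rfl := (eq_of_heq h2).symm
      exact Or.inl (by simp)
    · injection hs with h1 h2
      subst h1
      obtain rfl := (eq_of_heq h2).symm
      exact Or.inl (by simp)
    · refine Or.inr ⟨u ++ (m ++ ⟨k, g * hh⟩ :: r), ?_, ?_⟩
      · exact Or.inr ⟨u ++ m, r, k, g, hh, by simp, by simp⟩
      · exact Or.inl ⟨u, m ++ ⟨k, g * hh⟩ :: r, i, by simp, by simp⟩
    · refine Or.inr ⟨l ++ ⟨k, g * hh⟩ :: (m ++ v), ?_, ?_⟩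
      · exact Or.inr ⟨l, m ++ v, k, g, hh, by simp, by simp⟩
      · exact Or.inl ⟨l ++ ⟨k, g * hh⟩ :: m, v, i, by simp, by simp⟩

theorem ds_vs_pair {j : ι} {p q : M j} {a m b₀ bw : List (Σ i, M i)}
    (hm : ∀ t ∈ m, Γ.Adj j t.1)
    (h : Ds M (a ++ ⟨j, p⟩ :: (m ++ ⟨j, q⟩ :: b₀)) bw) :
    ∃ e, ReflTransGen (DT Γ M) (Quot.mk _ bw) e ∧
      ReflTransGen (DT Γ M) (Quot.mk _ (a ++ (m ++ ⟨j, p * q⟩ :: b₀))) e := by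
  rcases h with ⟨l, r, k, heq, rfl⟩ | ⟨l, r, k, g, hh, heq, rfl⟩
  · -- cancellation
    rcases split_single a heq with ⟨rfl, hs, hv⟩ | ⟨m₁, rfl, hv⟩ | ⟨m₁, rfl, rfl⟩
    · -- the cancelled letter is the marked ⟨j,p⟩, so p = 1
      injection hs with h1 h2
      subst h1
      obtain rfl := (eq_of_heq h2).symm
      subst hv
      refine ⟨Quot.mk _ (a ++ (m ++ ⟨j, q⟩ :: b₀)), ReflTransGen.refl, ?_⟩
      simp only [one_mul]
      exact ReflTransGen.refl
    · -- cancelled letter is right of the marked ⟨j,p⟩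
      rcases split_single m hv with ⟨rfl, hs2, rfl⟩ | ⟨m₂, rfl, rfl⟩ | ⟨m₂, rfl, rfl⟩
      · -- cancelled letter is the marked ⟨j,q⟩, so q = 1
        injection hs2 with h1 h2
        subst h1
        obtain rfl := (eq_of_heq h2).symm
        refine ⟨Quot.mk _ (a ++ (m ++ ⟨j, p * 1⟩ :: b₀)), ?_, ReflTransGen.refl⟩
        have hb : ReflTransGen (Sw Γ M) ((a ++ ⟨j, p⟩ :: m) ++ b₀)
            (a ++ (m ++ ⟨j, p⟩ :: b₀)) := by simpa using bubble p m hm a b₀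
        simpa [mul_one] using (mkT_eq hb ▸ ReflTransGen.refl :
          ReflTransGen (DT Γ M) (Quot.mk _ ((a ++ ⟨j, p⟩ :: m) ++ b₀)) _)
      · -- cancelled letter inside b₀
        refine ⟨Quot.mk _ (a ++ (m ++ ⟨j, p * q⟩ :: (m₂ ++ r))), ?_, ?_⟩
        · simpa using ReflTransGen.single (dt_pair a m (m₂ ++ r) hm)
        · refine ReflTransGen.single (dt_of ReflTransGen.refl
            (Or.inl ⟨a ++ m ++ ⟨j, p * q⟩ :: m₂, r, k, by simp, by simp⟩))
      · -- cancelled letter inside m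
        refine ⟨Quot.mk _ (a ++ ((m₁ ++ m₂) ++ ⟨j, p * q⟩ :: b₀)), ?_, ?_⟩
        · have hm' : ∀ t ∈ m₁ ++ m₂, Γ.Adj j t.1 := by
            intro t ht
            apply hm
            simp only [List.mem_append, List.mem_cons] at ht ⊢
            tauto
          simpa using ReflTransGen.single (dt_pair a (m₁ ++ m₂) b₀ hm')
        · refine ReflTransGen.single (dt_of ReflTransGen.refl
            (Or.inl ⟨a ++ m₁, m₂ ++ ⟨j, p * q⟩ :: b₀, k, by simp, by simp⟩))
    · -- cancelled letter inside a
      refine ⟨Quot.mk _ ((l ++ m₁) ++ (m ++ ⟨j, p * q⟩ :: b₀)), ?_, ?_⟩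
      · simpa using ReflTransGen.single (dt_pair (l ++ m₁) m b₀ hm)
      · refine ReflTransGen.single (dt_of ReflTransGen.refl
          (Or.inl ⟨l, m₁ ++ (m ++ ⟨j, p * q⟩ :: b₀), k, by simp, by simp⟩))
  · -- amalgamation
    rcases split_double a heq with ⟨rfl, hs, hv⟩ | ⟨rfl, hs, hv⟩ | ⟨m₁, rfl, hv⟩ | ⟨m₁, rfl, rfl⟩
    · -- marked ⟨j,p⟩ is the left letter of the amalgamated pair
      injection hs with h1 h2
      subst h1
      obtain rfl := eq_of_heq h2
      cases m with
      | nil =>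
        simp only [List.nil_append, List.cons.injEq] at hv
        obtain ⟨hs2, rfl⟩ := hv
        injection hs2 with h3 h4
        subst h4
        refine ⟨Quot.mk _ (a ++ ⟨j, p * q⟩ :: b₀), ?_, ?_⟩
        · exact ReflTransGen.refl
        · simpa using (ReflTransGen.refl :
            ReflTransGen (DT Γ M) (Quot.mk _ (a ++ ⟨j, p * q⟩ :: b₀)) _)
      | cons t m₀ =>
        simp only [List.cons_append, List.cons.injEq] at hv
        obtain ⟨rfl, rfl⟩ := hv
        exact (Γ.irrefl (hm ⟨j, hh⟩ (by simp))).elim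
    · -- marked ⟨j,p⟩ is the right letter of the amalgamated pair
      injection hs with h1 h2
      subst h1
      obtain rfl := eq_of_heq h2
      subst hv
      refine ⟨Quot.mk _ (l ++ (m ++ ⟨j, g * p * q⟩ :: b₀)), ?_, ?_⟩
      · simpa using ReflTransGen.single (dt_pair l m b₀ hm (p := g * p) (q := q))
      · have := ReflTransGen.single (dt_pair l m b₀ hm (p := g) (q := p * q))
        simpa [mul_assoc] using this
    · -- amalgamated pair strictly right of the marked ⟨j,p⟩
      rcases split_double m hv with ⟨rfl, hs2, rfl⟩ | ⟨hm2, hs2, rfl⟩ | ⟨m₂, rfl, rfl⟩ | ⟨m₂, rfl, rfl⟩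
      · -- marked ⟨j,q⟩ is the left letter of the pair
        injection hs2 with h1 h2
        subst h1
        obtain rfl := eq_of_heq h2
        refine ⟨Quot.mk _ (a ++ (m ++ ⟨j, p * (q * hh)⟩ :: r)), ?_, ?_⟩
        · simpa using ReflTransGen.single (dt_pair a m r hm (p := p) (q := q * hh))
        · refine ReflTransGen.single (dt_of ReflTransGen.refl
            (Or.inr ⟨a ++ m, r, j, p * q, hh, by simp, by simp [mul_assoc]⟩))
      · -- marked ⟨j,q⟩ is the right letter of the pair: impossible
        injection hs2 with h1 h2
        subst h1
        exact (Γ.irrefl (hm ⟨j, g⟩ (by simp [hm2]))).elim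
      · -- pair inside b₀
        refine ⟨Quot.mk _ (a ++ (m ++ ⟨j, p * q⟩ :: (m₂ ++ ⟨k, g * hh⟩ :: r))), ?_, ?_⟩
        · simpa using ReflTransGen.single (dt_pair a m (m₂ ++ ⟨k, g * hh⟩ :: r) hm)
        · refine ReflTransGen.single (dt_of ReflTransGen.refl
            (Or.inr ⟨a ++ m ++ ⟨j, p * q⟩ :: m₂, r, k, g, hh, by simp, by simp⟩))
      · -- pair inside m
        have hm' : ∀ t ∈ m₁ ++ ⟨k, g * hh⟩ :: m₂, Γ.Adj j t.1 := by
          intro t ht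
          simp only [List.mem_append, List.mem_cons] at ht
          rcases ht with ht | rfl | ht
          · exact hm t (by simp [ht])
          · exact hm ⟨k, g⟩ (by simp)
          · exact hm t (by simp [ht])
        refine ⟨Quot.mk _ (a ++ ((m₁ ++ ⟨k, g * hh⟩ :: m₂) ++ ⟨j, p * q⟩ :: b₀)), ?_, ?_⟩
        · simpa using ReflTransGen.single (dt_pair a (m₁ ++ ⟨k, g * hh⟩ :: m₂) b₀ hm')
        · refine ReflTransGen.single (dt_of ReflTransGen.refl
            (Or.inr ⟨a ++ m₁, m₂ ++ ⟨j, p * q⟩ :: b₀, k, g, hh, by simp, by simp⟩))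
    · -- pair inside a
      refine ⟨Quot.mk _ ((l ++ ⟨k, g * hh⟩ :: m₁) ++ (m ++ ⟨j, p * q⟩ :: b₀)), ?_, ?_⟩
      · simpa using ReflTransGen.single (dt_pair (l ++ ⟨k, g * hh⟩ :: m₁) m b₀ hm)
      · refine ReflTransGen.single (dt_of ReflTransGen.refl
          (Or.inr ⟨l, m₁ ++ (m ++ ⟨j, p * q⟩ :: b₀), k, g, hh, by simp, by simp⟩))

theorem local_conf {x y b c : List (Σ i, M i)} (hxy : ReflTransGen (Sw Γ M) x y)
    (hb : Ds M x b) (hc : Ds M y c) :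
    ∃ e, ReflTransGen (DT Γ M) (Quot.mk _ b) e ∧ ReflTransGen (DT Γ M) (Quot.mk _ c) e := by
  rcases hc with ⟨u, v, i, rfl, rfl⟩ | ⟨u, v, jj, p, q, rfl, rfl⟩
  · obtain ⟨u', v', rfl, hee⟩ := ee_track (⟨i, 1⟩ : Σ i, M i) (ee_symm hxy)
    rcases ds_vs_single hb with rfl | ⟨d, hd1, hd2⟩
    · refine ⟨Quot.mk _ (u' ++ v'), ReflTransGen.refl, ?_⟩
      rw [mkT_eq hee]
    · exact ⟨Quot.mk _ d, ReflTransGen.single (dt_of ReflTransGen.refl hd2),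
        ReflTransGen.single (dt_of hee hd1)⟩
  · obtain ⟨a, m, b₀, rfl, hma, hee⟩ := ee_track_pair (ee_symm hxy)
    obtain ⟨e, h1, h2⟩ := ds_vs_pair hma hb
    refine ⟨e, h1, ?_⟩
    rw [mkT_eq hee]
    exact h2

section Newman

variable {β : Type*} (ρ : β → β → Prop) (meas : β → ℕ)

theorem newman_aux (hdec : ∀ a b, ρ a b → meas b < meas a)
    (hlc : ∀ a b c, ρ a b → ρ a c → ∃ d, ReflTransGen ρ b d ∧ ReflTransGen ρ c d) :
    ∀ n a, meas a ≤ n → ∀ b c, ReflTransGen ρ a b → ReflTransGen ρ a c →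
      ∃ d, ReflTransGen ρ b d ∧ ReflTransGen ρ c d := by
  intro n
  induction n with
  | zero =>
    intro a ha b c hab hac
    rcases hab.cases_head with rfl | ⟨b₁, hb₁, _⟩
    · exact ⟨c, hac, ReflTransGen.refl⟩
    · exact absurd (hdec _ _ hb₁) (by omega)
  | succ n ih =>
    intro a ha b c hab hac
    rcases hab.cases_head with rfl | ⟨b₁, hb₁, hb₂⟩
    · exact ⟨c, hac, ReflTransGen.refl⟩
    rcases hac.cases_head with rfl | ⟨c₁, hc₁, hc₂⟩
    · exact ⟨b, ReflTransGen.refl, ReflTransGen.head hb₁ hb₂⟩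
    obtain ⟨d₀, hbd₀, hcd₀⟩ := hlc a b₁ c₁ hb₁ hc₁
    obtain ⟨e, hbe, hde⟩ := ih b₁ (by have := hdec _ _ hb₁; omega) b d₀ hb₂ hbd₀
    obtain ⟨f, hcf, hef⟩ := ih c₁ (by have := hdec _ _ hc₁; omega) c e hc₂ (hcd₀.trans hde)
    exact ⟨f, hbe.trans hef, hcf⟩

theorem newman_eqv (hdec : ∀ a b, ρ a b → meas b < meas a)
    (hlc : ∀ a b c, ρ a b → ρ a c → ∃ d, ReflTransGen ρ b d ∧ ReflTransGen ρ c d)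
    {a b : β} (h : Relation.EqvGen ρ a b) :
    ∃ d, ReflTransGen ρ a d ∧ ReflTransGen ρ b d := by
  induction h with
  | rel x y h => exact ⟨y, ReflTransGen.single h, ReflTransGen.refl⟩
  | refl x => exact ⟨x, ReflTransGen.refl, ReflTransGen.refl⟩
  | symm x y _ ih => obtain ⟨d, h1, h2⟩ := ih; exact ⟨d, h2, h1⟩
  | trans x y z _ _ ih1 ih2 =>
    obtain ⟨d1, hx1, hy1⟩ := ih1
    obtain ⟨d2, hy2, hz2⟩ := ih2
    obtain ⟨e, he1, he2⟩ := newman_aux ρ meas hdec hlc (meas y) y le_rfl d1 d2 hy1 hy2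
    exact ⟨e, hx1.trans he1, hz2.trans he2⟩

end Newman

variable (Γ M) in
/-- Length is well defined on shuffle classes. -/
def measT : Quot (Sw Γ M) → ℕ :=
  Quot.lift List.length (fun _ _ h => h.perm.length_eq)

theorem dt_meas : ∀ A B, DT Γ M A B → measT Γ M B < measT Γ M A := by
  rintro A B ⟨x, c, rfl, rfl, hds⟩
  have := hds.length
  show c.length < x.length
  omega

theorem dt_local : ∀ A B C, DT Γ M A B → DT Γ M A C →
    ∃ D, ReflTransGen (DT Γ M) B D ∧ ReflTransGen (DT Γ M) C D := by
  rintro A B C ⟨x, b, rfl, rfl, hb⟩ ⟨y, c, hA, rfl, hc⟩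
  exact local_conf (ee_of_mkT hA) hb hc

theorem rtg_normal {A B : Quot (Sw Γ M)} (h : ReflTransGen (DT Γ M) A B)
    (hn : ∀ C, ¬ DT Γ M A C) : B = A := by
  rcases h.cases_head with rfl | ⟨C, hC, _⟩
  · rfl
  · exact absurd hC (hn C)

theorem ws_append_left {w w' : List (Σ i, M i)} (c : List (Σ i, M i))
    (h : WordStep Γ M w w') : WordStep Γ M (c ++ w) (c ++ w') := by
  rcases h with ⟨l, r, i, rfl, rfl⟩ | ⟨l, r, i, g, hh, rfl, rfl⟩ |
    ⟨l, r, i, j, g, hh, hadj, rfl, rfl⟩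
  · exact Or.inl ⟨c ++ l, r, i, by simp, by simp⟩
  · exact Or.inr (Or.inl ⟨c ++ l, r, i, g, hh, by simp, by simp⟩)
  · exact Or.inr (Or.inr ⟨c ++ l, r, i, j, g, hh, hadj, by simp, by simp⟩)

theorem ws_append_right {w w' : List (Σ i, M i)} (c : List (Σ i, M i))
    (h : WordStep Γ M w w') : WordStep Γ M (w ++ c) (w' ++ c) := by
  rcases h with ⟨l, r, i, rfl, rfl⟩ | ⟨l, r, i, g, hh, rfl, rfl⟩ |
    ⟨l, r, i, j, g, hh, hadj, rfl, rfl⟩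
  · exact Or.inl ⟨l, r ++ c, i, by simp, by simp⟩
  · exact Or.inr (Or.inl ⟨l, r ++ c, i, g, hh, by simp, by simp⟩)
  · exact Or.inr (Or.inr ⟨l, r ++ c, i, j, g, hh, hadj, by simp, by simp⟩)

variable (Γ M) in
/-- Words modulo elementary moves. -/
abbrev QW := Quot (WordStep Γ M)

instance : Mul (QW Γ M) :=
  ⟨fun a b =>
    Quot.liftOn a
      (fun w => Quot.liftOn b (fun v => Quot.mk _ (w ++ v))
        (fun v v' h => Quot.sound (ws_append_left w h)))
      (fun w w' h => by
        induction b using Quot.ind with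
        | _ v => exact Quot.sound (ws_append_right v h))⟩

instance : Monoid (QW Γ M) where
  one := Quot.mk _ []
  mul_assoc a b c := by
    induction a using Quot.ind with | _ wa =>
    induction b using Quot.ind with | _ wb =>
    induction c using Quot.ind with | _ wc =>
    exact congrArg (Quot.mk _) (List.append_assoc wa wb wc)
  one_mul a := by
    induction a using Quot.ind with | _ w => rfl
  mul_one a := by
    induction a using Quot.ind with | _ w =>
    exact congrArg (Quot.mk _) (List.append_nil w)

theorem qw_mk_mul (w v : List (Σ i, M i)) :
    (Quot.mk (WordStep Γ M) w * Quot.mk (WordStep Γ M) v : QW Γ M) = Quot.mk _ (w ++ v) := rfl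

variable (Γ M) in
/-- The canonical map from a vertex group to the quotient monoid of words. -/
def phi (i : ι) : M i →* QW Γ M where
  toFun g := Quot.mk _ [⟨i, g⟩]
  map_one' := Quot.sound (Or.inl ⟨[], [], i, rfl, rfl⟩)
  map_mul' g h := by
    show Quot.mk (WordStep Γ M) [⟨i, g * h⟩]
      = Quot.mk (WordStep Γ M) [⟨i, g⟩] * Quot.mk (WordStep Γ M) [⟨i, h⟩]
    rw [qw_mk_mul]
    exact (Quot.sound (show WordStep Γ M [⟨i, g⟩, ⟨i, h⟩] [⟨i, g * h⟩] from
      Or.inr (Or.inl ⟨[], [], i, g, h, rfl, rfl⟩))).symm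

theorem phi_apply (i : ι) (g : M i) : phi Γ M i g = Quot.mk (WordStep Γ M) [⟨i, g⟩] := rfl

variable (Γ M) in
/-- The induced map from the free product. -/
def piQ : Monoid.CoprodI M →* QW Γ M := Monoid.CoprodI.lift (phi Γ M)

theorem inv_pair (i : ι) (g : M i) :
    (Quot.mk (WordStep Γ M) [⟨i, g⟩] : QW Γ M) * Quot.mk _ [⟨i, g⁻¹⟩] = 1 := by
  have s1 : (Quot.mk (WordStep Γ M) [⟨i, g⟩, ⟨i, g⁻¹⟩] : QW Γ M)
      = Quot.mk _ [⟨i, g * g⁻¹⟩] := Quot.sound (Or.inr (Or.inl ⟨[], [], i, g, g⁻¹, rfl, rfl⟩))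
  have s2 : (Quot.mk (WordStep Γ M) [⟨i, (1 : M i)⟩] : QW Γ M) = Quot.mk _ [] :=
    Quot.sound (Or.inl ⟨[], [], i, rfl, rfl⟩)
  calc (Quot.mk (WordStep Γ M) [⟨i, g⟩] : QW Γ M) * Quot.mk _ [⟨i, g⁻¹⟩]
      = Quot.mk _ [⟨i, g * g⁻¹⟩] := s1
    _ = Quot.mk _ [⟨i, (1 : M i)⟩] := by rw [mul_inv_cancel]
    _ = 1 := s2

theorem piQ_ker : ∀ x ∈ graphProdRels Γ M, piQ Γ M x = 1 := by
  rintro x ⟨i, j, hadj, g, h, rfl⟩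
  have e1 : (Monoid.CoprodI.of g)⁻¹ = Monoid.CoprodI.of g⁻¹ := (map_inv _ g).symm
  have e2 : (Monoid.CoprodI.of h)⁻¹ = Monoid.CoprodI.of h⁻¹ := (map_inv _ h).symm
  rw [e1, e2, map_mul, map_mul, map_mul]
  simp only [piQ, Monoid.CoprodI.lift_of, phi_apply]
  have c1 : (Quot.mk (WordStep Γ M) [⟨j, h⟩] : QW Γ M) * Quot.mk _ [⟨i, g⁻¹⟩]
      = Quot.mk _ [⟨i, g⁻¹⟩] * Quot.mk _ [⟨j, h⟩] :=
    Quot.sound (Or.inr (Or.inr ⟨[], [], j, i, h, g⁻¹, hadj.symm, rfl, rfl⟩))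
  rw [mul_assoc (Quot.mk (WordStep Γ M) [⟨i, g⟩] : QW Γ M), c1,
    ← mul_assoc, inv_pair, one_mul, inv_pair]

variable (Γ M) in
/-- The induced map from the graph product. -/
def pibar : GraphProduct Γ M →* QW Γ M :=
  QuotientGroup.lift _ (piQ Γ M) (by
    refine Subgroup.normalClosure_le_normal ?_
    intro x hx
    exact MonoidHom.mem_ker.mpr (piQ_ker x hx))

theorem pibar_eval (w : List (Σ i, M i)) :
    pibar Γ M (evalWord Γ M w) = Quot.mk (WordStep Γ M) w := by
  induction w with
  | nil =>
    have : evalWord Γ M [] = 1 := by simp [evalWord]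
    rw [this, map_one]
    rfl
  | cons s t ih =>
    have h0 : evalWord Γ M (s :: t) =
        QuotientGroup.mk (Monoid.CoprodI.of s.2) * evalWord Γ M t := by
      simp [evalWord]
    rw [h0, map_mul, ih]
    have h1 : pibar Γ M (QuotientGroup.mk (Monoid.CoprodI.of s.2))
        = Quot.mk (WordStep Γ M) [⟨s.1, s.2⟩] := by
      have h2 : pibar Γ M (QuotientGroup.mk (Monoid.CoprodI.of s.2))
          = piQ Γ M (Monoid.CoprodI.of s.2) := rfl
      rw [h2, piQ, Monoid.CoprodI.lift_of, phi_apply]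
    rw [h1]
    rfl

theorem eqv_to_dt {w w' : List (Σ i, M i)} (h : Relation.EqvGen (WordStep Γ M) w w') :
    Relation.EqvGen (DT Γ M) (Quot.mk (Sw Γ M) w) (Quot.mk (Sw Γ M) w') := by
  induction h with
  | rel u u' hr =>
    rcases wordStep_iff.mp hr with hd | hs
    · exact Relation.EqvGen.rel _ _ ⟨u, u', rfl, rfl, hd⟩
    · rw [Quot.sound hs]
      exact Relation.EqvGen.refl _
  | refl u => exact Relation.EqvGen.refl _
  | symm _ _ _ ih => exact Relation.EqvGen.symm _ _ ih
  | trans _ _ _ _ _ ih1 ih2 => exact Relation.EqvGen.trans _ _ _ ih1 ih2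

theorem reduced_normal {w : List (Σ i, M i)} (hw : ReducedWord Γ M w) :
    ∀ B, ¬ DT Γ M (Quot.mk (Sw Γ M) w) B := by
  rintro B ⟨x, c, hx, rfl, hds⟩
  have hee : ReflTransGen (Sw Γ M) w x := ee_of_mkT hx
  have h1 : ReflTransGen (WordStep Γ M) w x :=
    ReflTransGen.mono (fun _ _ hs => wordStep_iff.mpr (Or.inr hs)) _ _ hee
  have h2 : ReflTransGen (WordStep Γ M) w c := h1.tail (wordStep_iff.mpr (Or.inl hds))
  have h3 := hw c h2
  have h4 : c.length + 1 = x.length := hds.length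
  have h5 : w.length = x.length := (ee_perm hee).length_eq
  omega

end

end GreenAux

/-- Green's normal form, uniqueness part: any two reduced words
representing the same element of a graph product have the same length and the same
support; hence the length and support of an element are well defined. -/
theorem graph_product_reduced_words_same_length_support
    {ι : Type*} (Γ : SimpleGraph ι) (M : ι → Type*) [∀ i, Group (M i)]
    (w₁ w₂ : List (Σ i, M i))
    (h₁ : ReducedWord Γ M w₁) (h₂ : ReducedWord Γ M w₂)
    (heq : evalWord Γ M w₁ = evalWord Γ M w₂) :
    w₁.length = w₂.length ∧ wordSupport M w₁ = wordSupport M w₂ := by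
  have hq : Quot.mk (WordStep Γ M) w₁ = Quot.mk (WordStep Γ M) w₂ := by
    have h := congrArg (GreenAux.pibar Γ M) heq
    rwa [GreenAux.pibar_eval, GreenAux.pibar_eval] at h
  have heqv := Quot.eq.mp hq
  have hdt := GreenAux.eqv_to_dt heqv
  obtain ⟨d, hd1, hd2⟩ := GreenAux.newman_eqv (GreenAux.DT Γ M) (GreenAux.measT Γ M)
    GreenAux.dt_meas GreenAux.dt_local hdt
  have e1 := GreenAux.rtg_normal hd1 (GreenAux.reduced_normal h₁)
  have e2 := GreenAux.rtg_normal hd2 (GreenAux.reduced_normal h₂)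
  have hmk : Quot.mk (GreenAux.Sw Γ M) w₁ = Quot.mk (GreenAux.Sw Γ M) w₂ := e1.symm.trans e2
  have hperm := GreenAux.ee_perm (GreenAux.ee_of_mkT hmk)
  refine ⟨hperm.length_eq, ?_⟩
  ext i
  simp only [wordSupport, Set.mem_setOf_eq]
  exact ⟨fun ⟨g, hg⟩ => ⟨g, hperm.mem_iff.mp hg⟩, fun ⟨g, hg⟩ => ⟨g, hperm.mem_iff.mpr hg⟩⟩
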